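/- Let P be a pmf on a finite set X, \rho > 0, L a length function satisfying Kraft's inequality, G_L its associated guessing function (increasing order of L-lengths), G^* an optimal guessing function (decreasing order of P-probabilities), L^* a length function minimizing E[2^{\rho L(X)}], and c = \sum_{i=1}^{|X|} 1/i. Then E[G_L(X)^\rho] / E[G^*(X)^\rho] \le (E[2^{\rho L(X)}] / E[2^{\rho L^*(X)}]) \cdot 2^{\rho(1+\log_2 c)}. -/

import Mathlib

/-- The ratio of guessing moments of the guessing function `G_L` associated with a length
function `L` to the optimal guessing moments is bounded by the corresponding ratio of
exponentiated-length moments times `2^{ρ(1 + log₂ c)}`. -/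
theorem guessing_ratio_upper_bound {α : Type*} [Fintype α] [Nonempty α]
    (P : α → ℝ) (hP0 : ∀ x, 0 ≤ P x) (hP1 : ∑ x, P x = 1)
    (ρ : ℝ) (hρ : 0 < ρ)
    -- `L` is a length function satisfying Kraft's inequality
    (L : α → ℕ) (hKraft : ∑ x, (2 : ℝ) ^ (-(L x : ℤ)) ≤ 1)
    -- `G_L` is the guessing function associated with `L` (increasing order of lengths)
    (Gl : α → ℕ) (hGLinj : Function.Injective Gl)
    (hGLrange : ∀ x, 1 ≤ Gl x ∧ Gl x ≤ Fintype.card α)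
    (hGLinc : ∀ a b, Gl a ≤ Gl b → L a ≤ L b)
    -- `Gstar` is an optimal guessing function (decreasing order of `P`-probabilities)
    (Gstar : α → ℕ) (hGsinj : Function.Injective Gstar)
    (hGsrange : ∀ x, 1 ≤ Gstar x ∧ Gstar x ≤ Fintype.card α)
    (hGsdec : ∀ a b, Gstar a ≤ Gstar b → P b ≤ P a)
    -- `Lstar` is a length function minimizing `E[2^{ρ L(X)}]`
    (Lstar : α → ℕ) (hKraftStar : ∑ x, (2 : ℝ) ^ (-(Lstar x : ℤ)) ≤ 1)
    (hLstarOpt : ∀ L' : α → ℕ, (∑ x, (2 : ℝ) ^ (-(L' x : ℤ)) ≤ 1) →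
      ∑ x, P x * (2 : ℝ) ^ (ρ * (Lstar x : ℝ)) ≤ ∑ x, P x * (2 : ℝ) ^ (ρ * (L' x : ℝ)))
    (c : ℝ) (hc : c = ∑ i ∈ Finset.Icc 1 (Fintype.card α), (1 : ℝ) / i) :
    (∑ x, P x * (Gl x : ℝ) ^ ρ) / (∑ x, P x * (Gstar x : ℝ) ^ ρ) ≤
      ((∑ x, P x * (2 : ℝ) ^ (ρ * (L x : ℝ))) /
        (∑ x, P x * (2 : ℝ) ^ (ρ * (Lstar x : ℝ)))) *
        (2 : ℝ) ^ (ρ * (1 + Real.logb 2 c)) := by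
  set n := Fintype.card α with hn
  have hn1 : 1 ≤ n := Fintype.card_pos
  have hc1 : (1 : ℝ) ≤ c := by
    rw [hc]
    have h1 : (1 : ℕ) ∈ Finset.Icc 1 n := Finset.mem_Icc.2 ⟨le_refl _, hn1⟩
    calc (1:ℝ) = 1 / ((1:ℕ) : ℝ) := by norm_num
    _ ≤ ∑ i ∈ Finset.Icc 1 n, (1:ℝ)/i :=
      Finset.single_le_sum (f := fun i : ℕ => (1:ℝ)/i) (fun i _ => by positivity) h1
  have hcpos : (0:ℝ) < c := lt_of_lt_of_le one_pos hc1
  -- Step 1: Gl x ≤ 2 ^ L x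
  have key1 : ∀ x, (Gl x : ℝ) ≤ 2 ^ (L x) := by
    intro x
    set T := Finset.univ.filter (fun y => L y ≤ L x) with hT
    have hGlT : Gl x ≤ T.card := by
      have himg : Finset.image Gl Finset.univ = Finset.Icc 1 n := by
        apply Finset.eq_of_subset_of_card_le
        · intro i hi
          obtain ⟨y, _, rfl⟩ := Finset.mem_image.1 hi
          exact Finset.mem_Icc.2 ⟨(hGLrange y).1, (hGLrange y).2⟩
        · rw [Finset.card_image_of_injective _ hGLinj]
          simp [Nat.card_Icc, hn]
      have hsub : Finset.Icc 1 (Gl x) ⊆ Finset.image Gl T := by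
        intro i hi
        have hi' : i ∈ Finset.Icc 1 n :=
          Finset.mem_Icc.2 ⟨(Finset.mem_Icc.1 hi).1, (Finset.mem_Icc.1 hi).2.trans (hGLrange x).2⟩
        rw [← himg] at hi'
        obtain ⟨y, _, rfl⟩ := Finset.mem_image.1 hi'
        refine Finset.mem_image.2 ⟨y, ?_, rfl⟩
        simp only [hT, Finset.mem_filter, Finset.mem_univ, true_and]
        exact hGLinc y x (Finset.mem_Icc.1 hi).2
      have := (Finset.card_le_card hsub).trans Finset.card_image_le
      simpa [Nat.card_Icc] using this
    have hTcard : (T.card : ℝ) ≤ 2 ^ (L x) := by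
      have hsum1 : (T.card : ℝ) * (2:ℝ) ^ (-(L x : ℤ)) ≤ ∑ y ∈ T, (2:ℝ) ^ (-(L y : ℤ)) := by
        have := Finset.card_nsmul_le_sum T (fun y => (2:ℝ) ^ (-(L y : ℤ))) ((2:ℝ) ^ (-(L x : ℤ)))
          (fun y hy => by
            refine zpow_le_zpow_right₀ one_le_two ?_
            have : L y ≤ L x := (Finset.mem_filter.1 hy).2
            omega)
        simpa [nsmul_eq_mul] using this
      have hsum2 : ∑ y ∈ T, (2:ℝ) ^ (-(L y : ℤ)) ≤ 1 := by
        refine le_trans ?_ hKraft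
        exact Finset.sum_le_sum_of_subset_of_nonneg (Finset.subset_univ T)
          (fun y _ _ => by positivity)
      have hpow : (0:ℝ) < (2:ℝ) ^ (-(L x : ℤ)) := by positivity
      have h2 : (T.card : ℝ) * (2:ℝ) ^ (-(L x : ℤ)) ≤ 1 := hsum1.trans hsum2
      have heq : ((2:ℝ) ^ (-(L x : ℤ)))⁻¹ = 2 ^ (L x) := by
        rw [zpow_neg, inv_inv, zpow_natCast]
      rw [← heq, ← one_div, le_div_iff₀ hpow]
      exact h2
    calc (Gl x : ℝ) ≤ (T.card : ℝ) := Nat.cast_le.2 hGlT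
    _ ≤ 2 ^ (L x) := hTcard
  -- A ≤ C
  have hAC : (∑ x, P x * (Gl x : ℝ) ^ ρ) ≤ ∑ x, P x * (2 : ℝ) ^ (ρ * (L x : ℝ)) := by
    refine Finset.sum_le_sum fun x _ => ?_
    refine mul_le_mul_of_nonneg_left ?_ (hP0 x)
    have h1 : (Gl x : ℝ) ^ ρ ≤ ((2:ℝ) ^ (L x : ℕ)) ^ ρ :=
      Real.rpow_le_rpow (Nat.cast_nonneg _) (key1 x) hρ.le
    calc (Gl x : ℝ) ^ ρ ≤ ((2:ℝ) ^ (L x : ℕ)) ^ ρ := h1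
    _ = (2:ℝ) ^ (ρ * (L x : ℝ)) := by
      rw [← Real.rpow_natCast (2:ℝ) (L x), ← Real.rpow_mul (by norm_num), mul_comm]
  -- auxiliary length function
  set L' : α → ℕ := fun x => ⌈Real.logb 2 (c * (Gstar x : ℝ))⌉₊ with hL'
  have hGpos : ∀ x, (0:ℝ) < (Gstar x : ℝ) := fun x => by
    exact_mod_cast Nat.lt_of_lt_of_le Nat.zero_lt_one (hGsrange x).1
  have hG1 : ∀ x, (1:ℝ) ≤ (Gstar x : ℝ) := fun x => by exact_mod_cast (hGsrange x).1
  have hcG1 : ∀ x, (1:ℝ) ≤ c * (Gstar x : ℝ) := fun x => by nlinarith [hG1 x, hc1]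
  have hcGpos : ∀ x, (0:ℝ) < c * (Gstar x : ℝ) := fun x => lt_of_lt_of_le one_pos (hcG1 x)
  have hlogb0 : ∀ x, 0 ≤ Real.logb 2 (c * (Gstar x : ℝ)) := fun x =>
    Real.logb_nonneg (by norm_num) (hcG1 x)
  -- Kraft for L'
  have hKraftL' : ∑ x, (2 : ℝ) ^ (-(L' x : ℤ)) ≤ 1 := by
    have hterm : ∀ x, (2 : ℝ) ^ (-(L' x : ℤ)) ≤ (c * (Gstar x : ℝ))⁻¹ := by
      intro x
      have h1 : (2:ℝ) ^ (-(L' x : ℤ)) = (2:ℝ) ^ (-(L' x : ℝ)) := by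
        rw [← Real.rpow_intCast (2:ℝ) (-(L' x : ℤ))]
        norm_num
      rw [h1]
      have h2 : -(L' x : ℝ) ≤ -Real.logb 2 (c * (Gstar x : ℝ)) := by
        have := Nat.le_ceil (Real.logb 2 (c * (Gstar x : ℝ)))
        simp only [hL'] at *
        linarith
      calc (2:ℝ) ^ (-(L' x : ℝ)) ≤ (2:ℝ) ^ (-Real.logb 2 (c * (Gstar x : ℝ))) :=
        Real.rpow_le_rpow_of_exponent_le one_le_two h2
      _ = (c * (Gstar x : ℝ))⁻¹ := by
        rw [Real.rpow_neg (by norm_num), Real.rpow_logb two_pos (by norm_num) (hcGpos x)]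
    have hsum : ∑ x, (2 : ℝ) ^ (-(L' x : ℤ)) ≤ ∑ x, (c * (Gstar x : ℝ))⁻¹ :=
      Finset.sum_le_sum fun x _ => hterm x
    have hinv : ∑ x, (c * (Gstar x : ℝ))⁻¹ = 1 := by
      have himg : Finset.image Gstar Finset.univ = Finset.Icc 1 n := by
        apply Finset.eq_of_subset_of_card_le
        · intro i hi
          obtain ⟨y, _, rfl⟩ := Finset.mem_image.1 hi
          exact Finset.mem_Icc.2 ⟨(hGsrange y).1, (hGsrange y).2⟩
        · rw [Finset.card_image_of_injective _ hGsinj]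
          simp [Nat.card_Icc, hn]
      have hre : ∑ x, ((Gstar x : ℝ))⁻¹ = ∑ i ∈ Finset.Icc 1 n, ((i:ℝ))⁻¹ := by
        rw [← himg, Finset.sum_image (fun x _ y _ h => hGsinj h)]
      have : ∑ x, (c * (Gstar x : ℝ))⁻¹ = c⁻¹ * ∑ x, ((Gstar x : ℝ))⁻¹ := by
        rw [Finset.mul_sum]
        exact Finset.sum_congr rfl fun x _ => by rw [mul_inv]
      rw [this, hre]
      have : ∑ i ∈ Finset.Icc 1 n, ((i:ℝ))⁻¹ = c := by
        rw [hc]; exact Finset.sum_congr rfl fun i _ => (one_div _).symm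
      rw [this, inv_mul_cancel₀ (ne_of_gt hcpos)]
    calc ∑ x, (2 : ℝ) ^ (-(L' x : ℤ)) ≤ ∑ x, (c * (Gstar x : ℝ))⁻¹ := hsum
    _ = 1 := hinv.le.antisymm hinv.ge
  -- D ≤ K * B
  set K := (2 : ℝ) ^ (ρ * (1 + Real.logb 2 c)) with hK
  have hKpos : 0 < K := Real.rpow_pos_of_pos two_pos _
  have hDKB : (∑ x, P x * (2 : ℝ) ^ (ρ * (Lstar x : ℝ))) ≤
      K * ∑ x, P x * (Gstar x : ℝ) ^ ρ := by
    have hstep : (∑ x, P x * (2 : ℝ) ^ (ρ * (Lstar x : ℝ))) ≤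
        ∑ x, P x * (2 : ℝ) ^ (ρ * (L' x : ℝ)) := hLstarOpt L' hKraftL'
    refine hstep.trans ?_
    rw [Finset.mul_sum]
    refine Finset.sum_le_sum fun x _ => ?_
    rw [show K * (P x * (Gstar x : ℝ) ^ ρ) = P x * (K * (Gstar x : ℝ) ^ ρ) by ring]
    refine mul_le_mul_of_nonneg_left ?_ (hP0 x)
    have hle : (L' x : ℝ) ≤ 1 + Real.logb 2 c + Real.logb 2 (Gstar x : ℝ) := by
      have h1 : (L' x : ℝ) < Real.logb 2 (c * (Gstar x : ℝ)) + 1 :=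
        Nat.ceil_lt_add_one (hlogb0 x)
      have h2 : Real.logb 2 (c * (Gstar x : ℝ)) =
          Real.logb 2 c + Real.logb 2 (Gstar x : ℝ) :=
        Real.logb_mul (ne_of_gt hcpos) (ne_of_gt (hGpos x))
      linarith
    calc (2:ℝ) ^ (ρ * (L' x : ℝ))
        ≤ (2:ℝ) ^ (ρ * (1 + Real.logb 2 c) + ρ * Real.logb 2 (Gstar x : ℝ)) := by
          refine Real.rpow_le_rpow_of_exponent_le one_le_two ?_
          nlinarith [hle]
    _ = K * (Gstar x : ℝ) ^ ρ := by
          rw [Real.rpow_add two_pos, hK]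
          congr 1
          rw [mul_comm ρ, Real.rpow_mul (by norm_num),
            Real.rpow_logb two_pos (by norm_num) (hGpos x)]
  -- positivity of the denominators
  have hB1 : (1:ℝ) ≤ ∑ x, P x * (Gstar x : ℝ) ^ ρ := by
    rw [← hP1]
    refine Finset.sum_le_sum fun x _ => ?_
    have : (1:ℝ) ≤ (Gstar x : ℝ) ^ ρ := Real.one_le_rpow (hG1 x) hρ.le
    nlinarith [hP0 x]
  have hD1 : (1:ℝ) ≤ ∑ x, P x * (2 : ℝ) ^ (ρ * (Lstar x : ℝ)) := by
    rw [← hP1]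
    refine Finset.sum_le_sum fun x _ => ?_
    have : (1:ℝ) ≤ (2:ℝ) ^ (ρ * (Lstar x : ℝ)) :=
      Real.one_le_rpow one_le_two (by positivity)
    nlinarith [hP0 x]
  have hBpos : (0:ℝ) < ∑ x, P x * (Gstar x : ℝ) ^ ρ := lt_of_lt_of_le one_pos hB1
  have hDpos : (0:ℝ) < ∑ x, P x * (2 : ℝ) ^ (ρ * (Lstar x : ℝ)) := lt_of_lt_of_le one_pos hD1
  have hA0 : (0:ℝ) ≤ ∑ x, P x * (Gl x : ℝ) ^ ρ :=
    Finset.sum_nonneg fun x _ => mul_nonneg (hP0 x) (Real.rpow_nonneg (Nat.cast_nonneg _) _)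
  -- final algebra
  rw [div_mul_eq_mul_div, div_le_div_iff₀ hBpos hDpos]
  nlinarith [mul_le_mul_of_nonneg_right hAC hDpos.le,
    mul_le_mul_of_nonneg_left hDKB (hA0.trans hAC),
    mul_le_mul_of_nonneg_right hDKB hA0]
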